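/- Let B = (b₁,…,bₙ) ∈ ℝ^{d×n} be a basis with Gram–Schmidt orthogonalization b̃₁,…,b̃ₙ, let γ ≥ 2 be real, and define α₁ := 1 and αᵢ := max{α_{i−1}, ⌈‖b̃ᵢ‖/(γ^i·‖b₁‖)⌉} for 2 ≤ i ≤ n. Then α₁ ≤ α₂ ≤ … ≤ αₙ, and for every i, if αᵢ < α_{i+1} then ‖b̃_{i+1}‖/α_{i+1} > (γ/2)·(‖b̃ᵢ‖/αᵢ). -/

import Mathlib

open scoped RealInnerProductSpace BigOperators

noncomputable section

/-- The set of integer linear combinations of `B 0, …, B (n-1)`. -/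
def zspan {d n : ℕ} (B : Fin n → EuclideanSpace ℝ (Fin d)) : Set (EuclideanSpace ℝ (Fin d)) :=
  {x | ∃ c : Fin n → ℤ, x = ∑ i, (c i : ℝ) • B i}

/-- `L` is a lattice of rank `n`: the ℤ-span of `n` ℝ-linearly independent vectors. -/
def IsLattice {d : ℕ} (L : Set (EuclideanSpace ℝ (Fin d))) (n : ℕ) : Prop :=
  ∃ B : Fin n → EuclideanSpace ℝ (Fin d), LinearIndependent ℝ B ∧ L = zspan B

/-- The dual set `S* := {w ∈ span_ℝ S : ⟨w,y⟩ ∈ ℤ for all y ∈ S}`. -/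
def dualSet {d : ℕ} (S : Set (EuclideanSpace ℝ (Fin d))) : Set (EuclideanSpace ℝ (Fin d)) :=
  {w | w ∈ Submodule.span ℝ S ∧ ∀ y ∈ S, ∃ m : ℤ, ⟪w, y⟫ = (m : ℝ)}

/-- Orthogonal projection onto the orthogonal complement of `span_ℝ S`. -/
def projPerp {d : ℕ} (S : Set (EuclideanSpace ℝ (Fin d))) (x : EuclideanSpace ℝ (Fin d)) : EuclideanSpace ℝ (Fin d) :=
  (Submodule.orthogonalProjectionOnto (Submodule.span ℝ S)ᗮ x : EuclideanSpace ℝ (Fin d))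

/-- `det(ℒ) = √(det(BᵀB))`, computed from a basis `B` via its Gram matrix. -/
def gramDet {d n : ℕ} (B : Fin n → EuclideanSpace ℝ (Fin d)) : ℝ :=
  Real.sqrt (Matrix.det (Matrix.of fun i j => ⟪B i, B j⟫))

/-- The Gram–Schmidt orthogonalization `b̃ᵢ = Π_{{b₁,…,b_(i-1)}^⊥}(bᵢ)`. -/
def gsVec {d n : ℕ} (B : Fin n → EuclideanSpace ℝ (Fin d)) (i : Fin n) : EuclideanSpace ℝ (Fin d) :=
  projPerp (B '' {j | j < i}) (B i)

/-- The Gram–Schmidt coefficients `μ_(i,j) = ⟨b̃ᵢ, bⱼ⟩ / ‖b̃ᵢ‖²`. -/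
def mu {d n : ℕ} (B : Fin n → EuclideanSpace ℝ (Fin d)) (i j : Fin n) : ℝ :=
  ⟪gsVec B i, B j⟫ / ‖gsVec B i‖ ^ 2

/-- `B` is an LLL-reduced basis (with parameter δ = 3/4). -/
def IsLLLReduced {d n : ℕ} (B : Fin n → EuclideanSpace ℝ (Fin d)) : Prop :=
  LinearIndependent ℝ B ∧
  (∀ i j : Fin n, i < j → |mu B i j| ≤ 1 / 2) ∧
  (∀ (i : ℕ) (h : i + 1 < n),
    (3 / 4) * ‖gsVec B ⟨i, Nat.lt_of_succ_lt h⟩‖ ^ 2 ≤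
      ‖gsVec B ⟨i + 1, h⟩‖ ^ 2 +
        (mu B ⟨i, Nat.lt_of_succ_lt h⟩ ⟨i + 1, h⟩) ^ 2 * ‖gsVec B ⟨i, Nat.lt_of_succ_lt h⟩‖ ^ 2)

lemma projPerp_norm_le {d : ℕ} (S : Set (EuclideanSpace ℝ (Fin d)))
    (x : EuclideanSpace ℝ (Fin d)) : ‖projPerp S x‖ ≤ ‖x‖ := by
  have h1 := (Submodule.orthogonalProjectionOnto (Submodule.span ℝ S)ᗮ).le_opNorm x
  have h2 := Submodule.orthogonalProjectionOnto_norm_le (Submodule.span ℝ S)ᗮ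
  have h3 : ‖projPerp S x‖ = ‖Submodule.orthogonalProjectionOnto (Submodule.span ℝ S)ᗮ x‖ := rfl
  calc ‖projPerp S x‖ = ‖Submodule.orthogonalProjectionOnto (Submodule.span ℝ S)ᗮ x‖ := h3
    _ ≤ ‖Submodule.orthogonalProjectionOnto (Submodule.span ℝ S)ᗮ‖ * ‖x‖ := h1
    _ ≤ 1 * ‖x‖ := mul_le_mul_of_nonneg_right h2 (norm_nonneg _)
    _ = ‖x‖ := one_mul _

theorem stmt17 {d n : ℕ} (hn : 0 < n) (B : Fin n → EuclideanSpace ℝ (Fin d))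
    (hB : LinearIndependent ℝ B) (γ : ℝ) (hγ : 2 ≤ γ)
    (α : Fin n → ℝ) (hα0 : α ⟨0, hn⟩ = 1)
    (hαrec : ∀ (i : ℕ) (h : i + 1 < n),
      α ⟨i + 1, h⟩ = max (α ⟨i, Nat.lt_of_succ_lt h⟩)
        ((⌈‖gsVec B ⟨i + 1, h⟩‖ / (γ ^ (i + 2) * ‖B ⟨0, hn⟩‖)⌉ : ℤ) : ℝ)) :
    (∀ i j : Fin n, i ≤ j → α i ≤ α j) ∧
    (∀ (i : ℕ) (h : i + 1 < n),
      α ⟨i, Nat.lt_of_succ_lt h⟩ < α ⟨i + 1, h⟩ →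
      (γ / 2) * (‖gsVec B ⟨i, Nat.lt_of_succ_lt h⟩‖ / α ⟨i, Nat.lt_of_succ_lt h⟩) <
        ‖gsVec B ⟨i + 1, h⟩‖ / α ⟨i + 1, h⟩) := by
  have hγ0 : (0 : ℝ) < γ := lt_of_lt_of_le two_pos hγ
  have hb1 : (0 : ℝ) < ‖B ⟨0, hn⟩‖ := norm_pos_iff.mpr (hB.ne_zero ⟨0, hn⟩)
  -- stepwise monotonicity
  have step : ∀ (i : ℕ) (h : i + 1 < n), α ⟨i, Nat.lt_of_succ_lt h⟩ ≤ α ⟨i + 1, h⟩ := by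
    intro i h
    rw [hαrec i h]
    exact le_max_left _ _
  have mono : ∀ i j : Fin n, i ≤ j → α i ≤ α j := by
    rintro ⟨i, hi⟩ ⟨j, hj⟩ hij
    simp only [Fin.mk_le_mk] at hij
    induction j, hij using Nat.le_induction with
    | base => exact le_refl _
    | succ m hm ih =>
        exact le_trans (ih (Nat.lt_of_succ_lt hj)) (step m hj)
  have one_le : ∀ i : Fin n, 1 ≤ α i := by
    intro i
    rw [← hα0]
    exact mono _ i (Fin.mk_le_of_le_val (Nat.zero_le _))
  refine ⟨mono, ?_⟩
  intro i h hlt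
  set i0 : Fin n := ⟨i, Nat.lt_of_succ_lt h⟩ with hi0
  set i1 : Fin n := ⟨i + 1, h⟩ with hi1
  set D : ℝ := γ ^ (i + 2) * ‖B ⟨0, hn⟩‖ with hD
  have hDpos : 0 < D := mul_pos (pow_pos hγ0 _) hb1
  set x : ℝ := ‖gsVec B i1‖ / D with hx
  have hrec := hαrec i h
  -- α i1 = ⌈x⌉
  have hceil : α i1 = ((⌈x⌉ : ℤ) : ℝ) := by
    rcases max_cases (α i0) ((⌈x⌉ : ℤ) : ℝ) with ⟨he, _⟩ | ⟨he, _⟩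
    · rw [hrec, he] at hlt; exact absurd hlt (lt_irrefl _)
    · rw [hrec, he]
  have h1m : (1 : ℝ) < ((⌈x⌉ : ℤ) : ℝ) := lt_of_le_of_lt (one_le i0) (hceil ▸ hlt)
  have hm2 : (2 : ℤ) ≤ ⌈x⌉ := by exact_mod_cast h1m
  have hxm : ((⌈x⌉ : ℤ) : ℝ) - 1 < x := by
    have := Int.ceil_lt_add_one x
    linarith
  have hα1pos : (0 : ℝ) < α i1 := lt_trans one_pos (hceil ▸ h1m)
  have hα0pos : (0 : ℝ) < α i0 := lt_of_lt_of_le one_pos (one_le i0)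
  -- Claim A : ‖gsVec B i0‖ / α i0 ≤ γ ^ (i+1) * ‖B 0‖
  have claimA : ‖gsVec B i0‖ / α i0 ≤ γ ^ (i + 1) * ‖B ⟨0, hn⟩‖ := by
    have hE : (0 : ℝ) < γ ^ (i + 1) * ‖B ⟨0, hn⟩‖ := mul_pos (pow_pos hγ0 _) hb1
    rw [div_le_iff₀ hα0pos]
    rcases Nat.eq_zero_or_pos i with hi | hi
    · subst hi
      have h0 : i0 = ⟨0, hn⟩ := rfl
      have hle : ‖gsVec B i0‖ ≤ ‖B i0‖ := projPerp_norm_le _ _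
      have hγ1 : (1 : ℝ) ≤ γ ^ (0 + 1) := by
        simpa using le_trans one_le_two hγ
      calc ‖gsVec B i0‖ ≤ ‖B ⟨0, hn⟩‖ := h0 ▸ hle
        _ ≤ γ ^ (0 + 1) * ‖B ⟨0, hn⟩‖ * α i0 := by
            have hp : γ ^ (0 + 1) = γ := pow_one γ
            rw [hp]
            have s1 : ‖B ⟨0, hn⟩‖ ≤ ‖B ⟨0, hn⟩‖ * α i0 :=
              le_mul_of_one_le_right (norm_nonneg _) (one_le i0)
            have s2 : ‖B ⟨0, hn⟩‖ * α i0 ≤ γ * (‖B ⟨0, hn⟩‖ * α i0) :=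
              le_mul_of_one_le_left (by positivity) (le_trans one_le_two hγ)
            calc ‖B ⟨0, hn⟩‖ ≤ ‖B ⟨0, hn⟩‖ * α i0 := s1
              _ ≤ γ * (‖B ⟨0, hn⟩‖ * α i0) := s2
              _ = γ * ‖B ⟨0, hn⟩‖ * α i0 := by ring
    · obtain ⟨j, rfl⟩ : ∃ j, i = j + 1 := ⟨i - 1, (Nat.succ_pred_eq_of_pos hi).symm⟩
      have hj1 : j + 1 < n := Nat.lt_of_succ_lt h
      have hrecj := hαrec j hj1
      set y : ℝ := ‖gsVec B ⟨j + 1, hj1⟩‖ / (γ ^ (j + 2) * ‖B ⟨0, hn⟩‖) with hy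
      have hyα : y ≤ α i0 := by
        calc y ≤ ((⌈y⌉ : ℤ) : ℝ) := Int.le_ceil y
          _ ≤ max (α ⟨j, Nat.lt_of_succ_lt hj1⟩) ((⌈y⌉ : ℤ) : ℝ) := le_max_right _ _
          _ = α i0 := hrecj.symm
      have hEy : (0 : ℝ) < γ ^ (j + 2) * ‖B ⟨0, hn⟩‖ := mul_pos (pow_pos hγ0 _) hb1
      have hnorm : ‖gsVec B i0‖ = y * (γ ^ (j + 2) * ‖B ⟨0, hn⟩‖) := by
        rw [hy, div_mul_cancel₀ _ hEy.ne']
      have : i0 = ⟨j + 1, hj1⟩ := rfl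
      rw [hnorm]
      have : j + 2 = j + 1 + 1 := rfl
      calc y * (γ ^ (j + 2) * ‖B ⟨0, hn⟩‖)
          ≤ α i0 * (γ ^ (j + 2) * ‖B ⟨0, hn⟩‖) := by
            exact mul_le_mul_of_nonneg_right hyα (le_of_lt hEy)
        _ = γ ^ (j + 1 + 1) * ‖B ⟨0, hn⟩‖ * α i0 := by ring_nf
  -- Claim B : D / 2 < ‖gsVec B i1‖ / α i1
  have claimB : D / 2 < ‖gsVec B i1‖ / α i1 := by
    have hnorm : ‖gsVec B i1‖ = x * D := by rw [hx, div_mul_cancel₀ _ hDpos.ne']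
    rw [hnorm, hceil, lt_div_iff₀ (by exact_mod_cast lt_trans one_pos h1m), div_mul_eq_mul_div,
      div_lt_iff₀ (by norm_num : (0:ℝ) < 2)]
    have hm1 : (1 : ℝ) ≤ ((⌈x⌉ : ℤ) : ℝ) - 1 := by
      have h2r : (2 : ℝ) ≤ ((⌈x⌉ : ℤ) : ℝ) := by exact_mod_cast hm2
      linarith
    calc D * ((⌈x⌉ : ℤ) : ℝ)
        = D * (((⌈x⌉ : ℤ) : ℝ) - 1) + D := by ring
      _ ≤ D * (((⌈x⌉ : ℤ) : ℝ) - 1) + D * (((⌈x⌉ : ℤ) : ℝ) - 1) := by nlinarith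
      _ = (((⌈x⌉ : ℤ) : ℝ) - 1) * D * 2 := by ring
      _ < x * D * 2 := by nlinarith
  -- combine
  calc (γ / 2) * (‖gsVec B i0‖ / α i0)
      ≤ (γ / 2) * (γ ^ (i + 1) * ‖B ⟨0, hn⟩‖) := by
        exact mul_le_mul_of_nonneg_left claimA (by positivity)
    _ = D / 2 := by rw [hD]; ring
    _ < ‖gsVec B i1‖ / α i1 := claimB
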